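/- Let λ be a cardinal number. There exists a commutative ring R with |R^×| = λ if and only if λ is (1) an odd positive integer of the form ∏_{i=1}^t (2^{n_i} − 1) for some positive integers n₁, …, n_t, or (2) an even positive integer, or (3) an infinite cardinal. -/

import Mathlib

universe u

namespace CardUnitsAux

/-- Units of a pi type. -/
def piUnits {ι : Type*} {B : ι → Type*} [∀ i, Monoid (B i)] :
    (∀ i, B i)ˣ ≃ ∀ i, (B i)ˣ where
  toFun v i := ⟨v.val i, v.inv i, congrFun v.val_inv i, congrFun v.inv_val i⟩
  invFun f := ⟨fun i => (f i : B i), fun i => ((f i)⁻¹ : (B i)ˣ),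
    funext fun i => (f i).val_inv, funext fun i => (f i).inv_val⟩
  left_inv v := Units.ext rfl
  right_inv f := funext fun i => Units.ext rfl

open TrivSqZeroExt in
/-- Units of a trivial square-zero extension. -/
noncomputable def tszeUnits (R : Type*) (M : Type*) [CommRing R] [AddCommGroup M] [Module R M]
    [Module Rᵐᵒᵖ M] [IsCentralScalar R M] :
    (TrivSqZeroExt R M)ˣ ≃ Rˣ × M where
  toFun v := ((isUnit_iff_isUnit_fst.mp v.isUnit).unit, v.val.snd)
  invFun p := (isUnit_iff_isUnit_fst.mpr
      (show IsUnit (fst (inl (p.1 : R) + inr p.2)) by simp [p.1.isUnit])).unit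
  left_inv v := Units.ext (by simp [inl_fst_add_inr_snd_eq])
  right_inv p := by
    refine Prod.ext (Units.ext ?_) ?_
    · simp
    · simp

lemma mk_eq_nat_card (α : Type u) [Finite α] : Cardinal.mk α = Nat.card α := by
  have := Fintype.ofFinite α
  rw [Cardinal.mk_fintype, Nat.card_eq_fintype_card]

lemma ulift_units (R₀ : Type) [CommRing R₀] [Finite R₀ˣ] :
    Cardinal.mk (ULift.{u} R₀)ˣ = Nat.card R₀ˣ := by
  have e : (ULift.{u} R₀)ˣ ≃ R₀ˣ :=
    (Units.mapEquiv (ULift.ringEquiv (R := R₀)).toMulEquiv).toEquiv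
  haveI : Finite (ULift.{u} R₀)ˣ := Finite.of_equiv _ e.symm
  rw [mk_eq_nat_card, Nat.card_congr e]

section Constructions

noncomputable local instance mopMod (M : Type) [AddCommGroup M] : Module ℤᵐᵒᵖ M :=
  Module.compHom M ((RingHom.id ℤ).fromOpposite mul_comm)

local instance centralInt (M : Type) [AddCommGroup M] : IsCentralScalar ℤ M :=
  ⟨fun _ _ => rfl⟩

/-- Rings with an even number of units. -/
lemma exists_even (m : ℕ) (hm : 0 < m) :
    ∃ (R₀ : Type) (_ : CommRing R₀) (_ : Finite R₀ˣ), Nat.card R₀ˣ = 2 * m := by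
  haveI : NeZero m := ⟨hm.ne'⟩
  refine ⟨TrivSqZeroExt ℤ (ZMod m), inferInstance, ?_, ?_⟩
  · exact Finite.of_equiv _ (tszeUnits ℤ (ZMod m)).symm
  · rw [Nat.card_congr (tszeUnits ℤ (ZMod m)), Nat.card_prod, Nat.card_zmod,
      Nat.card_eq_fintype_card, Fintype.card_units_int]

/-- Rings with an odd number of units of the required form. -/
lemma exists_odd (t : ℕ) (n : Fin t → ℕ) (hn : ∀ i, 0 < n i) :
    ∃ (R₀ : Type) (_ : CommRing R₀) (_ : Finite R₀ˣ),
      Nat.card R₀ˣ = ∏ i, (2 ^ n i - 1) := by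
  haveI : Fact (Nat.Prime 2) := ⟨Nat.prime_two⟩
  refine ⟨∀ i, GaloisField 2 (n i), inferInstance, inferInstance, ?_⟩
  rw [Nat.card_congr (piUnits (B := fun i => GaloisField 2 (n i))), Nat.card_pi]
  refine Finset.prod_congr rfl fun i _ => ?_
  rw [Nat.card_units, GaloisField.card 2 (n i) (hn i).ne']

end Constructions

set_option maxHeartbeats 1000000 in
set_option synthInstance.maxHeartbeats 400000 in
/-- The hard direction: a finite odd number of units forces the product form. -/
lemma forward_odd (R : Type u) [CommRing R] [Finite Rˣ] (hodd : Odd (Nat.card Rˣ)) :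
    ∃ (t : ℕ) (n : Fin t → ℕ), (∀ i, 0 < n i) ∧ Nat.card Rˣ = ∏ i, (2 ^ n i - 1) := by
  rcases subsingleton_or_nontrivial R with hs | hnt
  · haveI : Subsingleton Rˣ := ⟨fun a b => Units.ext (Subsingleton.elim _ _)⟩
    exact ⟨0, fun i => i.elim0, fun i => i.elim0, by simp [Nat.card_unique]⟩
  -- characteristic 2
  have hk1 : (-1 : Rˣ) ^ Nat.card Rˣ = 1 := pow_card_eq_one'
  rw [Odd.neg_one_pow hodd] at hk1
  have hneg1 : (-1 : R) = 1 := by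
    have := congrArg Units.val hk1; simpa using this
  have h20 : ((2 : ℕ) : R) = 0 := by push_cast; linear_combination -hneg1
  have hchar2 : ringChar R = 2 := by
    have hdvd := ringChar.dvd h20
    rcases Nat.prime_two.eq_one_or_self_of_dvd _ hdvd with h | h
    · exact absurd h (CharP.char_ne_one R _)
    · exact h
  haveI : CharP R 2 := hchar2 ▸ ringChar.charP R
  haveI : Fact (Nat.Prime 2) := ⟨Nat.prime_two⟩
  -- R is reduced
  have hu : ∀ u : Rˣ, u ^ Nat.card Rˣ = 1 := fun u => pow_card_eq_one'
  haveI hred : IsReduced R := by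
    constructor
    intro x hx
    obtain ⟨N, hN⟩ := hx
    have hx2 : x ^ 2 ^ N = 0 := pow_eq_zero_of_le (Nat.lt_two_pow_self (n := N)).le hN
    have hunit : IsUnit (1 + x) := IsNilpotent.isUnit_one_add ⟨N, hN⟩
    have huval : (hunit.unit : R) = 1 + x := hunit.unit_spec
    have hpow : hunit.unit ^ 2 ^ N = 1 := by
      apply Units.ext
      rw [Units.val_pow_eq_pow_val, huval, Units.val_one, add_pow_char_pow, one_pow, hx2,
        add_zero]
    have h1 : orderOf hunit.unit ∣ Nat.card Rˣ := orderOf_dvd_of_pow_eq_one (hu _)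
    have h2 : orderOf hunit.unit ∣ 2 ^ N := orderOf_dvd_of_pow_eq_one hpow
    have hcop : Nat.Coprime (Nat.card Rˣ) (2 ^ N) :=
      Nat.Coprime.pow_right _ (Nat.coprime_comm.mp ((Nat.prime_two.coprime_iff_not_dvd).mpr
        (by intro hdvd; have := Nat.odd_iff.mp hodd; omega)))
    have hord : orderOf hunit.unit = 1 :=
      Nat.dvd_one.mp (hcop ▸ Nat.dvd_gcd h1 h2)
    have : hunit.unit = 1 := orderOf_eq_one_iff.mp hord
    have hx0 : (1 : R) + x = 1 + 0 := by rw [add_zero, ← huval, this, Units.val_one]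
    exact add_left_cancel hx0
  -- the finite subalgebra generated by the units
  letI : Algebra (ZMod 2) R := ZMod.algebra R 2
  have hfin : Set.Finite {x : R | IsUnit x} := by
    have h : {x : R | IsUnit x} = Set.range (Units.val : Rˣ → R) := rfl
    rw [h]; exact Set.finite_range _
  set A := Algebra.adjoin (ZMod 2) {x : R | IsUnit x} with hA
  have hspan : Subalgebra.toSubmodule A = Submodule.span (ZMod 2) {x : R | IsUnit x} := by
    rw [hA, Algebra.adjoin_eq_span]
    have h1 : {x : R | IsUnit x} = ((IsUnit.submonoid R : Submonoid R) : Set R) := rfl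
    rw [h1, Submonoid.closure_eq]
  haveI hfinA : Finite A := by
    haveI : Module.Finite (ZMod 2) (Subalgebra.toSubmodule A) := by
      rw [hspan]; exact Module.Finite.span_of_finite _ hfin
    exact Module.finite_of_finite (ZMod 2) (M := Subalgebra.toSubmodule A)
  -- units of A are the units of R
  have hmem : ∀ u : Rˣ, (u : R) ∈ A := fun u => Algebra.subset_adjoin u.isUnit
  let f : Rˣ → Aˣ := fun u =>
    ⟨⟨(u : R), hmem u⟩, ⟨((u⁻¹ : Rˣ) : R), hmem u⁻¹⟩,
      Subtype.ext (by simp), Subtype.ext (by simp)⟩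
  let g : Aˣ → Rˣ := fun v =>
    ⟨(v.val : R), (v.inv : R), congrArg Subtype.val v.val_inv, congrArg Subtype.val v.inv_val⟩
  have e : Rˣ ≃ Aˣ := ⟨f, g, fun u => Units.ext rfl, fun v => Units.ext (Subtype.ext rfl)⟩
  -- structure theory of A
  haveI : IsReduced A := isReduced_of_injective (A.val.toRingHom) Subtype.val_injective
  haveI : CharP A 2 := RingHom.charP (A.val.toRingHom) Subtype.val_injective 2
  haveI : Finite (Ideal A) :=
    Finite.of_injective (fun I : Ideal A => (I : Set A)) SetLike.coe_injective
  haveI : Fintype ↥{I : Ideal A | I.IsMaximal} := Fintype.ofFinite _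
  letI fieldI : ∀ I : ↥{I : Ideal A | I.IsMaximal}, Field (A ⧸ (I.1 : Ideal A)) :=
    fun I => @Ideal.Quotient.field _ _ I.1 I.2
  letI fintQ : ∀ I : ↥{I : Ideal A | I.IsMaximal}, Fintype (A ⧸ (I.1 : Ideal A)) :=
    fun I => @Fintype.ofFinite _ (Finite.of_surjective _ Ideal.Quotient.mk_surjective)
  have hcharQ : ∀ I : ↥{I : Ideal A | I.IsMaximal}, CharP (A ⧸ (I.1 : Ideal A)) 2 := by
    intro I
    letI := fieldI I
    have h2 : ((2 : ℕ) : A ⧸ (I.1 : Ideal A)) = 0 := by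
      calc ((2 : ℕ) : A ⧸ (I.1 : Ideal A)) = Ideal.Quotient.mk I.1 ((2 : ℕ) : A) :=
            (map_natCast _ 2).symm
        _ = 0 := by rw [CharP.cast_eq_zero A 2, map_zero]
    have hdvd := ringChar.dvd h2
    haveI := ringChar.charP (A ⧸ (I.1 : Ideal A))
    have hp : (ringChar (A ⧸ (I.1 : Ideal A))).Prime :=
      CharP.char_is_prime (A ⧸ (I.1 : Ideal A)) (ringChar (A ⧸ (I.1 : Ideal A)))
    have hr2 := (Nat.prime_dvd_prime_iff_eq hp Nat.prime_two).mp hdvd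
    have hfin2 := ringChar.charP (A ⧸ (I.1 : Ideal A))
    rwa [hr2] at hfin2
  choose nn hnp hncard using fun I : ↥{I : Ideal A | I.IsMaximal} =>
    @FiniteField.card (A ⧸ (I.1 : Ideal A)) (fieldI I) (fintQ I) 2 (hcharQ I)
  have hcardI : ∀ I : ↥{I : Ideal A | I.IsMaximal},
      Nat.card (A ⧸ (I.1 : Ideal A))ˣ = 2 ^ (nn I : ℕ) - 1 := by
    intro I
    letI := fieldI I
    letI := fintQ I
    have h := Nat.card_units (A ⧸ (I.1 : Ideal A))
    rw [Nat.card_eq_fintype_card (α := A ⧸ (I.1 : Ideal A)), hncard I] at h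
    exact h
  let e2 := IsArtinianRing.equivPi A
  have hcard : Nat.card Rˣ = ∏ I : ↥{I : Ideal A | I.IsMaximal}, (2 ^ (nn I : ℕ) - 1) := by
    haveI : Fintype (MaximalSpectrum A) := Fintype.ofFinite _
    rw [Nat.card_congr e, Nat.card_congr (Units.mapEquiv e2.toMulEquiv).toEquiv,
      Nat.card_congr piUnits, Nat.card_pi]
    exact Fintype.prod_equiv ⟨fun m => ⟨m.asIdeal, m.isMaximal⟩, fun I => ⟨I.1, I.2⟩,
      fun _ => rfl, fun _ => rfl⟩ _ _ (fun m => hcardI ⟨m.asIdeal, m.isMaximal⟩)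
  refine ⟨Fintype.card ↥{I : Ideal A | I.IsMaximal},
    fun i => (nn ((Fintype.equivFin _).symm i) : ℕ),
    fun i => (nn _).pos, ?_⟩
  rw [hcard]
  exact Fintype.prod_equiv (Fintype.equivFin ↥{I : Ideal A | I.IsMaximal})
    _ _ (fun I => by simp)

end CardUnitsAux

open CardUnitsAux

/-- A cardinal `λ` is the cardinality of the group of units of some commutative
ring if and only if `λ` is an odd number of the form `∏ i, (2 ^ nᵢ - 1)` for
positive integers `n₁, …, n_t`, or an even (positive) number, or an infinite
cardinal. -/
theorem card_units_iff
    (lam : Cardinal.{u}) :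
    (∃ (R : Type u) (_ : CommRing R), Cardinal.mk Rˣ = lam) ↔
      ((∃ k : ℕ, lam = k ∧ Odd k ∧
          ∃ (t : ℕ) (n : Fin t → ℕ), (∀ i, 0 < n i) ∧ k = ∏ i, (2 ^ n i - 1)) ∨
        (∃ k : ℕ, lam = k ∧ 0 < k ∧ Even k) ∨
        Cardinal.aleph0 ≤ lam) := by
  constructor
  · rintro ⟨R, hR, rfl⟩
    rcases finite_or_infinite Rˣ with hfin | hinf
    · haveI : Nonempty Rˣ := ⟨1⟩
      have hk : Cardinal.mk Rˣ = (Nat.card Rˣ : Cardinal) := mk_eq_nat_card _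
      rcases Nat.even_or_odd (Nat.card Rˣ) with he | ho
      · exact Or.inr (Or.inl ⟨Nat.card Rˣ, hk, Nat.card_pos, he⟩)
      · obtain ⟨t, n, hn, hprod⟩ := forward_odd R ho
        exact Or.inl ⟨Nat.card Rˣ, hk, ho, t, n, hn, hprod⟩
    · exact Or.inr (Or.inr (Cardinal.infinite_iff.mp hinf))
  · rintro (⟨k, rfl, hodd, t, n, hn, rfl⟩ | ⟨k, rfl, hpos, heven⟩ | hinf)
    · obtain ⟨R₀, i0, ifin, hcard⟩ := exists_odd t n hn
      exact ⟨ULift R₀, inferInstance, by rw [ulift_units, hcard]⟩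
    · obtain ⟨m, hm⟩ := heven
      have hm2 : k = 2 * m := by omega
      have hmpos : 0 < m := by omega
      obtain ⟨R₀, i0, ifin, hcard⟩ := exists_even m hmpos
      refine ⟨ULift R₀, inferInstance, ?_⟩
      rw [ulift_units, hcard]
      exact_mod_cast hm2.symm
    · haveI hinf' : Infinite lam.out := Cardinal.infinite_iff.mpr (by rwa [Cardinal.mk_out])
      obtain ⟨fld⟩ := Infinite.nonempty_field (α := lam.out)
      letI := fld
      refine ⟨lam.out, inferInstance, ?_⟩
      have h1 : Cardinal.mk (lam.out)ˣ = Cardinal.mk {a : lam.out // a ≠ 0} :=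
        Cardinal.mk_congr unitsEquivNeZero
      have h2 : Cardinal.mk {a : lam.out // a ≠ 0} = Cardinal.mk ↥(({0} : Set lam.out)ᶜ) :=
        Cardinal.mk_congr (Equiv.subtypeEquivRight fun a => by simp)
      have h3 : Cardinal.mk ↥(({0} : Set lam.out)ᶜ) = Cardinal.mk lam.out := by
        apply Cardinal.mk_compl_of_infinite
        rw [Cardinal.mk_singleton]
        exact lt_of_lt_of_le Cardinal.one_lt_aleph0 (Cardinal.infinite_iff.mp hinf')
      rw [h1, h2, h3, Cardinal.mk_out]
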